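/- Let G = (V,E) be a finite simple graph, k ≥ 1 an integer, and Z ⊆ V with |Z| ≥ k+4 such that every vertex of Z is large-dense, any two distinct vertices of Z are adjacent in G, and all vertices z ∈ Z have the same closed neighborhood N(z) ∪ {z}. Then for any v ∈ Z, (G,k) admits a feasible solution if and only if (G − v, k) admits a feasible solution. -/

import Mathlib

open SimpleGraph

/-- The number of edges of `G` with both endpoints in the neighborhood of `v`. -/
noncomputable def rho {V : Type*} (G : SimpleGraph V) (v : V) : ℕ :=
  {e : Sym2 V | e ∈ G.edgeSet ∧ ∀ x ∈ e, G.Adj v x}.ncard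

/-- `v` is large-sparse: `|N(v)| > 7k` and `ρ(v) ≤ |N(v)|(|N(v)|−1)/4`. -/
def LargeSparse {V : Type*} (G : SimpleGraph V) (k : ℕ) (v : V) : Prop :=
  7 * k < (G.neighborSet v).ncard ∧
    4 * rho G v ≤ (G.neighborSet v).ncard * ((G.neighborSet v).ncard - 1)

/-- `v` is large-dense: `|N(v)| > 7k` and `ρ(v) > |N(v)|(|N(v)|−1)/4`. -/
def LargeDense {V : Type*} (G : SimpleGraph V) (k : ℕ) (v : V) : Prop :=
  7 * k < (G.neighborSet v).ncard ∧
    (G.neighborSet v).ncard * ((G.neighborSet v).ncard - 1) < 4 * rho G v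

/-- The connected component `c` of `H` is a clique. -/
def CompIsClique {W : Type*} (H : SimpleGraph W) (c : H.ConnectedComponent) : Prop :=
  H.IsClique c.supp

/-- The connected component `c` of `H` is a tree. -/
def CompIsTree {W : Type*} (H : SimpleGraph W) (c : H.ConnectedComponent) : Prop :=
  (H.induce c.supp).IsTree

/-- Every connected component of `H` is a clique or a tree. -/
def CliquesOrTrees {W : Type*} (H : SimpleGraph W) : Prop :=
  ∀ c : H.ConnectedComponent, CompIsClique H c ∨ CompIsTree H c

/-- `X` is a feasible solution for `(G, k)`: `|X| ≤ k` and every connected component of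
`G − X` is a clique or a tree. -/
def IsFeasible {V : Type*} (G : SimpleGraph V) (k : ℕ) (X : Set V) : Prop :=
  X.ncard ≤ k ∧ CliquesOrTrees (G.induce (Xᶜ : Set V))



section Aux

lemma isAcyclic_of_injective_hom {W W' : Type*} {A : SimpleGraph W} {B : SimpleGraph W'}
    (f : A →g B) (hf : Function.Injective f) (hB : B.IsAcyclic) : A.IsAcyclic :=
  fun _ c hc => hB (c.map f) (hc.map hf)

lemma supp_mem_of_walk {W : Type*} {H : SimpleGraph W} {a b : W} (p : H.Walk a b) :
    ∀ x ∈ p.support, H.connectedComponentMk x = H.connectedComponentMk a := by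
  induction p with
  | nil => intro x hx; simp_all
  | cons h q ih =>
    intro x hx
    rw [SimpleGraph.Walk.support_cons, List.mem_cons] at hx
    rcases hx with rfl | hx
    · rfl
    · rw [ih x hx]
      exact (ConnectedComponent.connectedComponentMk_eq_of_adj h).symm

lemma reachable_induce_of_walk {W : Type*} {H : SimpleGraph W} {s : Set W} :
    ∀ {a b : W} (p : H.Walk a b), (∀ x ∈ p.support, x ∈ s) →
    ∀ (ha : a ∈ s) (hb : b ∈ s), (H.induce s).Reachable ⟨a, ha⟩ ⟨b, hb⟩ := by
  intro a b p
  induction p with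
  | nil => intro _ ha hb; rfl
  | @cons a c b h q ih =>
    intro hsupp ha hb
    have hc : c ∈ s := hsupp c (by simp)
    have hadj : (H.induce s).Adj ⟨a, ha⟩ ⟨c, hc⟩ := by simpa using h
    exact hadj.reachable.trans (ih (fun x hx => hsupp x (by simp [hx])) hc hb)

lemma connected_induce_supp {W : Type*} (H : SimpleGraph W) (c : H.ConnectedComponent) :
    (H.induce c.supp).Connected := by
  obtain ⟨w, hw⟩ := c.exists_rep
  have : Nonempty ↥c.supp := ⟨⟨w, hw⟩⟩
  constructor
  rintro ⟨a, ha⟩ ⟨b, hb⟩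
  obtain ⟨p⟩ := ConnectedComponent.exact
    ((ha.trans hb.symm : H.connectedComponentMk a = H.connectedComponentMk b))
  exact reachable_induce_of_walk p
    (fun x hx => by rw [ConnectedComponent.mem_supp_iff, supp_mem_of_walk p x hx]; exact ha) ha hb

variable {V : Type*} {G : SimpleGraph V}

lemma reachable_induce_of_walk' {t s : Set V} :
    ∀ {a b : ↥t} (p : (G.induce t).Walk a b), (∀ x ∈ p.support, (x : V) ∈ s) →
    ∀ (ha : (a : V) ∈ s) (hb : (b : V) ∈ s), (G.induce s).Reachable ⟨a, ha⟩ ⟨b, hb⟩ := by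
  intro a b p
  induction p with
  | nil => intro _ ha hb; rfl
  | @cons a c b h q ih =>
    intro hsupp ha hb
    have hc : (c : V) ∈ s := hsupp c (by simp)
    have hadj : (G.induce s).Adj ⟨a, ha⟩ ⟨c, hc⟩ := by
      simp only [comap_adj, Function.Embedding.coe_subtype] at h ⊢
      exact h
    exact hadj.reachable.trans (ih (fun x hx => hsupp x (by simp [hx])) hc hb)

lemma not_isAcyclic_of_triangle {W : Type*} {H : SimpleGraph W} {a b c : W}
    (hab : H.Adj a b) (hbc : H.Adj b c) (hca : H.Adj c a) : ¬ H.IsAcyclic := by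
  intro hH
  have hC : (SimpleGraph.Walk.cons hab (SimpleGraph.Walk.cons hbc
      (SimpleGraph.Walk.cons hca SimpleGraph.Walk.nil))).IsCycle := by
    have h1 : a ≠ b := hab.ne
    have h2 : b ≠ c := hbc.ne
    have h3 : c ≠ a := hca.ne
    simp [Walk.isCycle_def, Walk.isTrail_def, h1, h2, h3, Sym2.eq, Sym2.rel_iff',
      h1.symm, h2.symm, h3.symm]
  exact hH _ hC

lemma transfer_comp {s t : Set V}
    (c : (G.induce t).ConnectedComponent) (e : (G.induce s).ConnectedComponent)
    (hsub : Subtype.val '' c.supp ⊆ Subtype.val '' e.supp)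
    (he : CompIsClique (G.induce s) e ∨ CompIsTree (G.induce s) e) :
    CompIsClique (G.induce t) c ∨ CompIsTree (G.induce t) c := by
  have hmem1 : ∀ x : ↥t, x ∈ c.supp → (x : V) ∈ s := by
    intro x hx
    obtain ⟨y, _, hyx⟩ := hsub ⟨x, hx, rfl⟩
    exact hyx ▸ y.2
  have hmem2 : ∀ (x : ↥t) (hx : x ∈ c.supp) (h1 : (x : V) ∈ s),
      (⟨(x : V), h1⟩ : ↥s) ∈ e.supp := by
    intro x hx h1
    obtain ⟨y, hy, hyx⟩ := hsub ⟨x, hx, rfl⟩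
    have : y = ⟨(x : V), h1⟩ := Subtype.ext hyx
    exact this ▸ hy
  rcases he with hcl | htr
  · left
    intro a ha b hb hab
    have h := hcl (hmem2 a ha (hmem1 a ha)) (hmem2 b hb (hmem1 b hb))
      (by simp only [ne_eq, Subtype.mk.injEq]; exact fun h => hab (Subtype.ext h))
    simp only [comap_adj, Function.Embedding.coe_subtype] at h ⊢
    exact h
  · right
    constructor
    · exact connected_induce_supp _ c
    · refine isAcyclic_of_injective_hom
        ⟨fun a => ⟨⟨(a.1 : V), hmem1 a.1 a.2⟩, hmem2 a.1 a.2 _⟩, ?_⟩ ?_ htr.IsAcyclic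
      · intro a b hab
        simp only [comap_adj, Function.Embedding.coe_subtype] at hab ⊢
        exact hab
      · intro a b hab
        apply Subtype.ext; apply Subtype.ext
        exact congrArg (fun z => ((z : ↥s) : V)) (Subtype.ext_iff.mp hab)


lemma cliquesOrTrees_subset {s t : Set V} (hts : t ⊆ s)
    (h : CliquesOrTrees (G.induce s)) : CliquesOrTrees (G.induce t) := by
  intro c
  obtain ⟨w, hw⟩ := c.exists_rep
  refine transfer_comp c ((G.induce s).connectedComponentMk ⟨(w : V), hts w.2⟩) ?_
    (h _)
  rintro x ⟨y, hy, rfl⟩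
  have hyw : (G.induce t).connectedComponentMk y = (G.induce t).connectedComponentMk w := by
    rw [(ConnectedComponent.mem_supp_iff c y).mp hy]; exact hw.symm
  obtain ⟨p⟩ := ConnectedComponent.exact hyw
  refine ⟨⟨(y : V), hts y.2⟩, ?_, rfl⟩
  rw [ConnectedComponent.mem_supp_iff]
  exact (ConnectedComponent.sound
    ((reachable_induce_of_walk' p (fun x _ => hts x.2) (hts y.2) (hts w.2)))).symm ▸ rfl

/-- Nested induce iso. -/
noncomputable def nestIso (s : Set V) (t : Set ↥s) :
    (G.induce s).induce t ≃g G.induce (Subtype.val '' t) where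
  toEquiv := Equiv.Set.image Subtype.val t Subtype.val_injective
  map_rel_iff' := by
    intro a b
    simp [Equiv.Set.image, Equiv.Set.imageOfInjOn]

lemma cliquesOrTrees_of_iso {W W' : Type*} {A : SimpleGraph W} {B : SimpleGraph W'}
    (φ : A ≃g B) (h : CliquesOrTrees A) : CliquesOrTrees B := by
  intro c
  set c' := φ.connectedComponentEquiv.symm c with hc'
  have hmapc : ConnectedComponent.map ↑φ c' = c :=
    φ.connectedComponentEquiv.apply_symm_apply c
  have hsupp : ∀ x : W', x ∈ c.supp ↔ φ.symm x ∈ c'.supp := by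
    intro x
    rw [ConnectedComponent.mem_supp_iff, ConnectedComponent.mem_supp_iff,
      ConnectedComponent.iso_inv_image_comp_eq_iff_eq_map, hmapc]
  rcases h c' with hcl | htr
  · left
    intro a ha b hb hab
    have h := hcl ((hsupp a).mp ha) ((hsupp b).mp hb)
      (fun hEq => hab (by simpa using congrArg φ hEq))
    exact φ.symm.map_adj_iff.mp h
  · right
    constructor
    · exact connected_induce_supp _ c
    · refine isAcyclic_of_injective_hom
        ⟨fun a => ⟨φ.symm a.1, (hsupp a.1).mp a.2⟩, ?_⟩ ?_ htr.IsAcyclic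
      · intro a b hab
        simp only [comap_adj, Function.Embedding.coe_subtype] at hab ⊢
        exact φ.symm.map_adj_iff.mpr hab
      · intro a b hab
        apply Subtype.ext
        have h2 : φ.symm (a : W') = φ.symm (b : W') := by
          exact congrArg (fun z => ((z : ↥c'.supp) : W)) hab
        simpa using congrArg φ h2

lemma walk_inv {W : Type*} {H : SimpleGraph W} (P : W → Prop)
    (hstep : ∀ a b, H.Adj a b → P a → P b) :
    ∀ {a b : W} (_ : H.Walk a b), P a → P b := by
  intro a b p
  induction p with
  | nil => exact id
  | cons hadj q ih => exact fun ha => ih (hstep _ _ hadj ha)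

lemma cliquesOrTrees_insert {s : Set V} {v z1 z2 z3 : V}
    (hv : v ∉ s) (h1 : z1 ∈ s) (h2 : z2 ∈ s) (h3 : z3 ∈ s)
    (h12 : G.Adj z1 z2) (h23 : G.Adj z2 z3) (h31 : G.Adj z3 z1)
    (htwin : G.neighborSet v ∪ {v} = G.neighborSet z1 ∪ {z1})
    (h : CliquesOrTrees (G.induce s)) : CliquesOrTrees (G.induce (insert v s)) := by
  classical
  set H : SimpleGraph ↥s := G.induce s with hH
  set H' : SimpleGraph ↥(insert v s) := G.induce (insert v s) with hH'
  set v' : ↥(insert v s) := ⟨v, Set.mem_insert v s⟩ with hv'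
  set d : H.ConnectedComponent := H.connectedComponentMk ⟨z1, h1⟩ with hd
  -- z2 z3 in d
  have hz2d : (⟨z2, h2⟩ : ↥s) ∈ d.supp := by
    rw [ConnectedComponent.mem_supp_iff]
    exact (ConnectedComponent.connectedComponentMk_eq_of_adj (by simpa [H, H', v'] using h12)).symm
  have hz3d : (⟨z3, h3⟩ : ↥s) ∈ d.supp := by
    rw [ConnectedComponent.mem_supp_iff]
    exact ConnectedComponent.connectedComponentMk_eq_of_adj (by simpa [H, H', v'] using h31)
  have hz1d : (⟨z1, h1⟩ : ↥s) ∈ d.supp := rfl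
  -- d is a clique
  have hdcl : CompIsClique H d := by
    rcases h d with hcl | htr
    · exact hcl
    · exfalso
      refine not_isAcyclic_of_triangle (H := H.induce d.supp)
        (a := ⟨⟨z1, h1⟩, hz1d⟩) (b := ⟨⟨z2, h2⟩, hz2d⟩) (c := ⟨⟨z3, h3⟩, hz3d⟩)
        (by simpa [H, H', v'] using h12) (by simpa [H, H', v'] using h23) (by simpa [H, H', v'] using h31) htr.IsAcyclic
  -- adjacency facts from twins
  have hvz1 : G.Adj v z1 := by
    have : z1 ∈ G.neighborSet v ∪ {v} := by
      rw [htwin]; exact Or.inr rfl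
    rcases this with h' | h'
    · exact h'
    · exact absurd (Set.mem_singleton_iff.mp h') (fun hh => hv (hh ▸ h1))
  have hadj_v : ∀ x : ↥s, x ∈ d.supp → G.Adj v (x : V) := by
    intro x hx
    by_cases hxz : x = ⟨z1, h1⟩
    · subst hxz; exact hvz1
    · have hadj : H.Adj ⟨z1, h1⟩ x := hdcl hz1d hx (Ne.symm hxz)
      have : (x : V) ∈ G.neighborSet z1 := by simpa [H, H', v'] using hadj
      have : (x : V) ∈ G.neighborSet v ∪ {v} := by
        rw [htwin]; exact Or.inl this
      rcases this with h' | h'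
      · exact h'
      · exact absurd (Set.mem_singleton_iff.mp h') (fun hh => hv (hh ▸ x.2))
  have hNv : ∀ w : V, G.Adj v w → w = z1 ∨ G.Adj z1 w := by
    intro w hw
    have : w ∈ G.neighborSet z1 ∪ {z1} := by rw [← htwin]; exact Or.inl hw
    rcases this with h' | h'
    · exact Or.inr h'
    · exact Or.inl (Set.mem_singleton_iff.mp h')
  intro c
  by_cases hvc : v' ∈ c.supp
  · -- component containing v : a clique
    left
    -- invariant along walks from v'
    have step : ∀ a b : ↥(insert v s), H'.Adj a b →
        (a = v' ∨ ∃ ha : (a : V) ∈ s, (⟨(a : V), ha⟩ : ↥s) ∈ d.supp) →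
        (b = v' ∨ ∃ hb : (b : V) ∈ s, (⟨(b : V), hb⟩ : ↥s) ∈ d.supp) := by
      intro a b hab hinv
      by_cases hbv : b = v'
      · exact Or.inl hbv
      · have hbs : (b : V) ∈ s := by
          rcases b.2 with h' | h'
          · exact absurd (Subtype.ext h') hbv
          · exact h'
        right
        rcases hinv with rfl | ⟨ha, had⟩
        · have hGadj : G.Adj v (b : V) := by simpa [H, H', v'] using hab
          rcases hNv _ hGadj with heq | hadj
          · exact ⟨hbs, by rw [ConnectedComponent.mem_supp_iff, hd]; congr 1; exact Subtype.ext heq⟩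
          · refine ⟨hbs, ?_⟩
            rw [ConnectedComponent.mem_supp_iff, hd]
            exact (ConnectedComponent.connectedComponentMk_eq_of_adj
              (by simpa [H, H', v'] using hadj : H.Adj (⟨z1, h1⟩ : ↥s) ⟨(b : V), hbs⟩)).symm
        · have hGadj : G.Adj (a : V) (b : V) := by simpa [H, H', v'] using hab
          refine ⟨hbs, ?_⟩
          rw [ConnectedComponent.mem_supp_iff]
          rw [← (ConnectedComponent.mem_supp_iff d _).mp had]
          exact (ConnectedComponent.connectedComponentMk_eq_of_adj
            (by simpa [H, H', v'] using hGadj : H.Adj (⟨(a : V), ha⟩ : ↥s) ⟨(b : V), hbs⟩)).symm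
    have key : ∀ w : ↥(insert v s), w ∈ c.supp →
        (w = v' ∨ ∃ hw : (w : V) ∈ s, (⟨(w : V), hw⟩ : ↥s) ∈ d.supp) := by
      intro w hw
      have hreach : H'.Reachable v' w := by
        apply ConnectedComponent.exact
        rw [(ConnectedComponent.mem_supp_iff c v').mp hvc,
          (ConnectedComponent.mem_supp_iff c w).mp hw]
      obtain ⟨p⟩ := hreach
      exact walk_inv _ step p (Or.inl rfl)
    intro a ha b hb hab
    rcases key a ha with rfl | ⟨has, had⟩
    · rcases key b hb with rfl | ⟨hbs, hbd⟩
      · exact absurd rfl hab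
      · simpa [H, H', v'] using hadj_v _ hbd
    · rcases key b hb with rfl | ⟨hbs, hbd⟩
      · simpa [H, H', v'] using (hadj_v _ had).symm
      · have hne : (⟨(a : V), has⟩ : ↥s) ≠ ⟨(b : V), hbs⟩ := by
          intro hEq
          have hv2 : (a : V) = (b : V) := congrArg (Subtype.val : ↥s → V) hEq
          exact hab (Subtype.ext hv2)
        simpa [H, H', v'] using (hdcl had hbd hne : H.Adj _ _)
  · -- component not containing v
    obtain ⟨w, hw⟩ := c.exists_rep
    have hwc : w ∈ c.supp := by rw [ConnectedComponent.mem_supp_iff]; exact hw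
    have hws : (w : V) ∈ s := by
      rcases w.2 with h' | h'
      · have hwv : w = v' := Subtype.ext h'
        exact absurd (hwv ▸ hwc) hvc
      · exact h'
    refine transfer_comp c (H.connectedComponentMk ⟨(w : V), hws⟩) ?_ (h _)
    rintro x ⟨y, hy, rfl⟩
    have hyw : H'.connectedComponentMk y = H'.connectedComponentMk w := by
      rw [(ConnectedComponent.mem_supp_iff c y).mp hy, (ConnectedComponent.mem_supp_iff c w).mp hwc]
    obtain ⟨p⟩ := ConnectedComponent.exact hyw
    have hsup : ∀ x ∈ p.support, (x : V) ∈ s := by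
      intro x hx
      have hxc : x ∈ c.supp := by
        rw [ConnectedComponent.mem_supp_iff, supp_mem_of_walk p x hx,
          (ConnectedComponent.mem_supp_iff c y).mp hy]
      rcases x.2 with h' | h'
      · exact absurd hxc (by rw [show x = v' from Subtype.ext h']; exact hvc)
      · exact h'
    have hys : (y : V) ∈ s := hsup y p.start_mem_support
    refine ⟨⟨(y : V), hys⟩, ?_, rfl⟩
    rw [ConnectedComponent.mem_supp_iff]
    exact ConnectedComponent.sound (reachable_induce_of_walk' p hsup hys hws)

end Aux

/-- let `Z` be a clique of at least `k+4` large-dense vertices all having the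
same closed neighborhood. Then for any `v ∈ Z`, `(G,k)` admits a feasible solution iff
`(G − v, k)` does. -/
theorem stmt_14 {V : Type*} [Fintype V] (G : SimpleGraph V) (k : ℕ) (hk : 1 ≤ k)
    (Z : Set V) (hZcard : k + 4 ≤ Z.ncard)
    (hZdense : ∀ z ∈ Z, LargeDense G k z)
    (hZclique : G.IsClique Z)
    (hZnbhd : ∀ z ∈ Z, ∀ w ∈ Z,
      G.neighborSet z ∪ {z} = G.neighborSet w ∪ {w})
    (v : V) (hvZ : v ∈ Z) :
    (∃ X : Set V, IsFeasible G k X) ↔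
      (∃ Y : Set ↥(({v}ᶜ : Set V)), IsFeasible (G.induce ({v}ᶜ : Set V)) k Y) := by
  classical
  constructor
  · rintro ⟨X, hX1, hX2⟩
    refine ⟨Subtype.val ⁻¹' X, ?_, ?_⟩
    · calc (Subtype.val ⁻¹' X : Set ↥({v}ᶜ : Set V)).ncard
          = (Subtype.val '' (Subtype.val ⁻¹' X : Set ↥({v}ᶜ : Set V))).ncard :=
            (Set.ncard_image_of_injective _ Subtype.val_injective).symm
        _ ≤ X.ncard := Set.ncard_le_ncard (Set.image_preimage_subset _ _) X.toFinite
        _ ≤ k := hX1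
    · have hcompl : (Subtype.val ⁻¹' X : Set ↥({v}ᶜ : Set V))ᶜ = Subtype.val ⁻¹' Xᶜ := rfl
      rw [hcompl]
      have hsub : Subtype.val '' (Subtype.val ⁻¹' Xᶜ : Set ↥({v}ᶜ : Set V)) ⊆ Xᶜ :=
        Set.image_preimage_subset _ _
      exact cliquesOrTrees_of_iso (nestIso _ _).symm (cliquesOrTrees_subset hsub hX2)
  · rintro ⟨Y, hY1, hY2⟩
    refine ⟨Subtype.val '' Y, ?_, ?_⟩
    · rw [Set.ncard_image_of_injective _ Subtype.val_injective]; exact hY1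
    · have hXc : (Subtype.val '' Y)ᶜ = insert v (Subtype.val '' (Yᶜ : Set ↥({v}ᶜ : Set V))) := by
        ext x
        by_cases hxv : x = v
        · subst hxv
          simp only [Set.mem_compl_iff, Set.mem_insert_iff, true_or, iff_true]
          rintro ⟨y, _, hy2⟩
          exact y.2 (by simp [hy2])
        · simp only [Set.mem_compl_iff, Set.mem_insert_iff, hxv, false_or]
          constructor
          · intro hx
            exact ⟨⟨x, by simp [hxv]⟩, fun hmem => hx ⟨_, hmem, rfl⟩, rfl⟩
          · rintro ⟨y, hy, rfl⟩ ⟨y', hy', hyy'⟩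
            exact hy (Subtype.ext hyy' ▸ hy')
      rw [hXc]
      -- the base: cliques or trees on val '' Yᶜ
      have hbase : CliquesOrTrees (G.induce (Subtype.val '' (Yᶜ : Set ↥({v}ᶜ : Set V)))) :=
        cliquesOrTrees_of_iso (nestIso _ _) hY2
      -- find three twins outside
      have hfin : (insert v (Subtype.val '' Y)).ncard ≤ k + 1 := by
        have := Set.ncard_insert_le v (Subtype.val '' Y)
        have h2 : (Subtype.val '' Y).ncard ≤ k := by
          rw [Set.ncard_image_of_injective _ Subtype.val_injective]; exact hY1
        omega
      have hdiff : 3 ≤ (Z \ insert v (Subtype.val '' Y)).ncard := by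
        have hsub : Z ⊆ (Z \ insert v (Subtype.val '' Y)) ∪ insert v (Subtype.val '' Y) := by
          intro x hx; by_cases h : x ∈ insert v (Subtype.val '' Y)
          · exact Or.inr h
          · exact Or.inl ⟨hx, h⟩
        have := Set.ncard_le_ncard hsub (Set.toFinite _)
        have hun := Set.ncard_union_le (Z \ insert v (Subtype.val '' Y))
          (insert v (Subtype.val '' Y))
        omega
      obtain ⟨T, hTsub, hT3⟩ := Set.exists_subset_card_eq hdiff
      obtain ⟨z1, z2, z3, h12, h13, h23, rfl⟩ := Set.ncard_eq_three.mp hT3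
      have hz1 := hTsub (by simp : z1 ∈ ({z1, z2, z3} : Set V))
      have hz2 := hTsub (by simp : z2 ∈ ({z1, z2, z3} : Set V))
      have hz3 := hTsub (by simp : z3 ∈ ({z1, z2, z3} : Set V))
      have hmem : ∀ z : V, z ∈ Z \ insert v (Subtype.val '' Y) →
          z ∈ Subtype.val '' (Yᶜ : Set ↥({v}ᶜ : Set V)) := by
        rintro z ⟨hzZ, hz⟩
        have hzv : z ≠ v := fun h => hz (Or.inl h)
        refine ⟨⟨z, by simp [hzv]⟩, ?_, rfl⟩
        intro hmem
        exact hz (Or.inr ⟨_, hmem, rfl⟩)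
      have hvnot : v ∉ Subtype.val '' (Yᶜ : Set ↥({v}ᶜ : Set V)) := by
        rintro ⟨y, _, hy2⟩; exact y.2 (by simp [hy2])
      refine cliquesOrTrees_insert hvnot (hmem z1 hz1) (hmem z2 hz2) (hmem z3 hz3)
        (hZclique hz1.1 hz2.1 h12) (hZclique hz2.1 hz3.1 h23)
        (hZclique hz3.1 hz1.1 (Ne.symm h13)) (hZnbhd v hvZ z1 hz1.1) hbase
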